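/- Let b = λ + iη with λ, η ∈ ℝ and λ > 0, and let 𝒫̂ₖ(b;x) = (2ᵏ(λ)ₖ/(2λ)ₖ)·𝒫ₖ(b;x) be the monic complementary Romanovski–Routh polynomials. Then for every k ≥ 0, 𝒫̂ₖ(b;0) = (−i)ᵏ · Σ_{j=0}^{k} [(−k)_j (b)_j/((2λ)_j · j!)]·2^j (a terminating ₂F₁(−k, b; 2λ; 2) evaluation); in particular, for integers L ≥ 0 and b = L+1−iη, the Taylor coefficients A_k^L(η) in the expansion F_L(η,w) = C_L(η)·w^{L+1}·Σ_{k=L+1}^{∞} A_k^L(η) w^{k−L−1} of the regular Coulomb wave function satisfy A_{k+L+1}^L(η) = ((−i)ᵏ/k!)·₂F₁(−k, L+1−iη; 2L+2; 2). -/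

import Mathlib

open Complex Finset

/-- Pochhammer symbol `(a)ₖ` over ℂ. -/
noncomputable def poch (a : ℂ) (k : ℕ) : ℂ := Polynomial.eval a (ascPochhammer ℂ k)

/-- Complementary Romanovski–Routh polynomials `𝒫ₙ(b;x)` with `b = λ + iη`,
defined by the three-term recurrence, evaluated at complex `x`. -/
noncomputable def crr (lam eta : ℝ) : ℕ → ℂ → ℂ
  | 0, _ => 1
  | 1, x => x - ((eta / lam : ℝ) : ℂ)
  | n + 2, x =>
      (x - ((eta / (lam + n + 1) : ℝ) : ℂ)) * crr lam eta (n + 1) x -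
        (((n + 1) * (2 * lam + n) / (4 * (lam + n) * (lam + n + 1)) : ℝ) : ℂ) *
          (x ^ 2 + 1) * crr lam eta n x

/-- Monic complementary Romanovski–Routh polynomials
`𝒫̂ₙ(b;x) = (2ⁿ(λ)ₙ/(2λ)ₙ)·𝒫ₙ(b;x)`. -/
noncomputable def crrMonic (lam eta : ℝ) (n : ℕ) (x : ℂ) : ℂ :=
  ((2 : ℂ) ^ n * poch (lam : ℂ) n / poch (2 * lam) n) * crr lam eta n x

lemma poch_zero (a : ℂ) : poch a 0 = 1 := by simp [poch]

lemma poch_succ (a : ℂ) (n : ℕ) : poch a (n+1) = poch a n * (a + n) := by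
  simp [poch, ascPochhammer_succ_eval]

lemma poch_one (a : ℂ) : poch a 1 = a := by
  rw [show (1:ℕ) = 0 + 1 from rfl, poch_succ, poch_zero]; simp

lemma poch_succ_left (a : ℂ) (n : ℕ) : poch a (n+1) = a * poch (a+1) n := by
  simp [poch, ascPochhammer_succ_left, Polynomial.eval_comp]

lemma poch_neg_nat {m j : ℕ} (h : m < j) : poch (-(m:ℂ)) j = 0 :=
  ascPochhammer_eval_neg_coe_nat_of_lt h

lemma ne_zero_of_re_pos' {z : ℂ} (h : 0 < z.re) : z ≠ 0 := by
  intro h0; rw [h0] at h; simp at h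

lemma poch_cast_pos_ne (x : ℝ) (hx : 0 < x) : ∀ n, poch (x:ℂ) n ≠ 0 := by
  intro n
  induction n with
  | zero => simp [poch_zero]
  | succ n ih =>
    rw [poch_succ]
    exact mul_ne_zero ih (ne_zero_of_re_pos' (by simp; positivity))

/-- Summand of the terminating ₂F₁(−m, b; 2λ; 2). -/
noncomputable def Tm (lam eta : ℝ) (m j : ℕ) : ℂ :=
  poch (-(m:ℂ)) j * poch ((lam:ℂ) + (eta:ℂ)*I) j /
    (poch (2*(lam:ℂ)) j * (Nat.factorial j : ℂ)) * 2^j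

/-- Telescoping certificate. -/
noncomputable def Gc (lam eta : ℝ) (k j : ℕ) : ℂ :=
  (-(j:ℂ) * ((j:ℂ) + 2*(lam:ℂ) - 1) / ((k:ℂ)+2)) *
    (poch (-(k:ℂ)-2) j * poch ((lam:ℂ) + (eta:ℂ)*I) j /
      (poch (2*(lam:ℂ)) j * (Nat.factorial j : ℂ)) * 2^j)

set_option maxHeartbeats 1000000 in
lemma termwise (lam eta : ℝ) (hl : 0 < lam) (k j : ℕ) :
    (2*(lam:ℂ) + k + 1) * Tm lam eta (k+2) j + (2*(eta:ℂ)*I) * Tm lam eta (k+1) j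
      - ((k:ℂ)+1) * Tm lam eta k j = Gc lam eta k (j+1) - Gc lam eta k j := by
  have hk2' : ((k:ℂ)+2) ≠ 0 := by
    have h := Nat.cast_ne_zero (R := ℂ).mpr (by omega : k+2 ≠ 0)
    push_cast at h; exact h
  have hC : poch (2*(lam:ℂ)) j ≠ 0 := by
    have := poch_cast_pos_ne (2*lam) (by positivity) j
    simpa using this
  have hfac : ((Nat.factorial j : ℕ) : ℂ) ≠ 0 := by
    exact_mod_cast Nat.cast_ne_zero.mpr (Nat.factorial_ne_zero j)
  have shift : ∀ a : ℂ, poch a j * (a + j) = a * poch (a+1) j := fun a =>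
    (poch_succ a j).symm.trans (poch_succ_left a j)
  have h1 : poch (-(k:ℂ)-2) j * ((-(k:ℂ)-2) + j) = (-(k:ℂ)-2) * poch (-(k:ℂ)-1) j := by
    have := shift (-(k:ℂ)-2)
    rwa [show (-(k:ℂ)-2)+1 = -(k:ℂ)-1 by ring] at this
  have h0 : poch (-(k:ℂ)-1) j * ((-(k:ℂ)-1) + j) = (-(k:ℂ)-1) * poch (-(k:ℂ)) j := by
    have := shift (-(k:ℂ)-1)
    rwa [show (-(k:ℂ)-1)+1 = -(k:ℂ) by ring] at this
  have ck2 : (-(((k+2):ℕ):ℂ)) = -(k:ℂ)-2 := by push_cast; ring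
  have ck1 : (-(((k+1):ℕ):ℂ)) = -(k:ℂ)-1 := by push_cast; ring
  have hD1 : poch (2*(lam:ℂ)) j * (Nat.factorial j : ℂ) ≠ 0 := mul_ne_zero hC hfac
  have hD2 : poch (2*(lam:ℂ)) (j+1) * ((Nat.factorial (j+1) : ℕ) : ℂ) ≠ 0 := by
    refine mul_ne_zero ?_ ?_
    · have := poch_cast_pos_ne (2*lam) (by positivity) (j+1)
      simpa using this
    · exact_mod_cast Nat.cast_ne_zero.mpr (Nat.factorial_ne_zero (j+1))
  rw [Tm, Tm, Tm, Gc, Gc, ck2, ck1]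
  have hk2c : ((k:ℂ)+2) ≠ 0 := hk2'
  rw [div_mul_eq_mul_div, div_mul_eq_mul_div, div_mul_eq_mul_div, div_mul_eq_mul_div,
    div_mul_eq_mul_div, ← mul_div_assoc, ← mul_div_assoc, ← mul_div_assoc,
    ← add_div, ← sub_div,
    ← mul_div_assoc, ← mul_div_assoc, div_div, div_mul_eq_mul_div, div_div,
    div_sub_div _ _ (mul_ne_zero hD2 hk2c) (mul_ne_zero hk2c hD1),
    div_eq_div_iff hD1 (mul_ne_zero (mul_ne_zero hD2 hk2c) (mul_ne_zero hk2c hD1))]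
  rw [poch_succ (-(k:ℂ)-2) j, poch_succ ((lam:ℂ) + (eta:ℂ)*I) j, poch_succ (2*(lam:ℂ)) j,
    Nat.factorial_succ]
  push_cast
  linear_combination ((poch (2*(lam:ℂ)) j * (Nat.factorial j : ℂ))^2 * ((j:ℂ)+1) *
      (2*(lam:ℂ)+(j:ℂ)) * ((k:ℂ)+2)) *
    ((poch ((lam:ℂ)+(eta:ℂ)*I) j * 2^j * (2*(eta:ℂ)*I + (-(k:ℂ)-1) + (j:ℂ))) * h1 +
     ((-(k:ℂ)-2) * poch ((lam:ℂ)+(eta:ℂ)*I) j * 2^j) * h0)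

lemma Gc_zero (lam eta : ℝ) (k : ℕ) : Gc lam eta k 0 = 0 := by
  simp [Gc]

lemma Gc_top (lam eta : ℝ) (k : ℕ) : Gc lam eta k (k+3) = 0 := by
  have h : poch (-(k:ℂ)-2) (k+3) = 0 := by
    rw [show -(k:ℂ)-2 = -(((k+2:ℕ)):ℂ) by push_cast; ring]
    exact poch_neg_nat (by omega)
  simp [Gc, h]

lemma sum_ext (lam eta : ℝ) (m N : ℕ) (h : m+1 ≤ N) :
    ∑ j ∈ range (m+1), Tm lam eta m j = ∑ j ∈ range N, Tm lam eta m j := by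
  refine Finset.sum_subset (Finset.range_subset_range.2 h) (fun x hx hnx => ?_)
  have : m < x := by simpa using hnx
  simp [Tm, poch_neg_nat this]

lemma sumrec (lam eta : ℝ) (hl : 0 < lam) (k : ℕ) :
    (2*(lam:ℂ)+k+1) * (∑ j ∈ range (k+3), Tm lam eta (k+2) j)
      + (2*(eta:ℂ)*I) * (∑ j ∈ range (k+2), Tm lam eta (k+1) j)
      - ((k:ℂ)+1) * (∑ j ∈ range (k+1), Tm lam eta k j) = 0 := by
  rw [sum_ext lam eta (k+1) (k+3) (by omega), sum_ext lam eta k (k+3) (by omega)]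
  rw [Finset.mul_sum, Finset.mul_sum, Finset.mul_sum, ← Finset.sum_add_distrib,
    ← Finset.sum_sub_distrib]
  rw [Finset.sum_congr rfl (fun j _ => termwise lam eta hl k j)]
  rw [Finset.sum_range_sub (Gc lam eta k), Gc_top, Gc_zero, sub_zero]

lemma key (lam eta : ℝ) (hl : 0 < lam) : ∀ k : ℕ,
    crrMonic lam eta k 0 = (-I)^k * ∑ j ∈ range (k+1), Tm lam eta k j := by
  have hbase0 : crrMonic lam eta 0 0 = (-I)^0 * ∑ j ∈ range 1, Tm lam eta 0 j := by
    have c0 : crr lam eta 0 0 = 1 := rfl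
    simp [crrMonic, c0, poch_zero, Tm]
  have hlam : ((lam:ℂ)) ≠ 0 := by
    simpa using ne_of_gt hl
  have hbase1 : crrMonic lam eta 1 0 = (-I)^1 * ∑ j ∈ range 2, Tm lam eta 1 j := by
    have c1 : crr lam eta 1 0 = 0 - ((eta / lam : ℝ) : ℂ) := rfl
    rw [crrMonic, c1, Finset.sum_range_succ, Finset.sum_range_one]
    simp only [Tm, poch_zero, poch_one, Nat.factorial_zero, Nat.factorial_one, pow_one, pow_zero]
    push_cast
    field_simp
    ring_nf
    rw [Complex.I_sq]
    ring
  have hstep : ∀ k : ℕ,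
      crrMonic lam eta k 0 = (-I)^k * ∑ j ∈ range (k+1), Tm lam eta k j →
      crrMonic lam eta (k+1) 0 = (-I)^(k+1) * ∑ j ∈ range (k+2), Tm lam eta (k+1) j →
      crrMonic lam eta (k+2) 0 = (-I)^(k+2) * ∑ j ∈ range (k+3), Tm lam eta (k+2) j := by
    intro k ih0 ih1
    have hne : (2*(lam:ℂ)+k+1) ≠ 0 := ne_zero_of_re_pos' (by simp; positivity)
    apply mul_left_cancel₀ hne
    have hrec : (2*(lam:ℂ) + k + 1) * crrMonic lam eta (k+2) 0 =
        (-2*(eta:ℂ)) * crrMonic lam eta (k+1) 0 - ((k:ℂ)+1) * crrMonic lam eta k 0 := by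
      have h2l : poch (2*(lam:ℂ)) k ≠ 0 := by
        have := poch_cast_pos_ne (2*lam) (by positivity) k
        simpa using this
      have hlk : ((lam:ℂ) + k) ≠ 0 := ne_zero_of_re_pos' (by simp; positivity)
      have hlk1 : ((lam:ℂ) + k + 1) ≠ 0 := ne_zero_of_re_pos' (by simp; positivity)
      have h2lk : (2*(lam:ℂ) + k) ≠ 0 := ne_zero_of_re_pos' (by simp; positivity)
      have h2lk1 : (2*(lam:ℂ) + k + 1) ≠ 0 := hne
      have e1 : poch (lam:ℂ) (k+2) = poch (lam:ℂ) k * ((lam:ℂ)+k) * ((lam:ℂ)+k+1) := by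
        rw [poch_succ, poch_succ]; push_cast; ring
      have e2 : poch (lam:ℂ) (k+1) = poch (lam:ℂ) k * ((lam:ℂ)+k) := by rw [poch_succ]
      have f1 : poch (2*(lam:ℂ)) (k+2) =
          poch (2*(lam:ℂ)) k * (2*(lam:ℂ)+k) * (2*(lam:ℂ)+k+1) := by
        rw [poch_succ, poch_succ]; push_cast; ring
      have f2 : poch (2*(lam:ℂ)) (k+1) = poch (2*(lam:ℂ)) k * (2*(lam:ℂ)+k) := by
        rw [poch_succ]
      have hcrr : crr lam eta (k+2) 0 =
          (0 - ((eta / (lam + k + 1) : ℝ) : ℂ)) * crr lam eta (k + 1) 0 -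
            (((k + 1) * (2 * lam + k) / (4 * (lam + k) * (lam + k + 1)) : ℝ) : ℂ) *
              ((0:ℂ) ^ 2 + 1) * crr lam eta k 0 := rfl
      rw [crrMonic, crrMonic, crrMonic, hcrr, e1, e2, f1, f2]
      push_cast
      set Q := poch (2*(lam:ℂ)) k with hQ
      set P := poch ((lam:ℂ)) k with hP
      set u := crr lam eta (k+1) 0 with hu
      set v := crr lam eta k 0 with hv
      rw [div_mul_eq_mul_div, div_mul_eq_mul_div, div_mul_eq_mul_div]
      rw [← mul_div_assoc, div_eq_iff (by exact mul_ne_zero (mul_ne_zero h2l h2lk) h2lk1)]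
      field_simp
      ring
    rw [hrec, ih0, ih1]
    have hs := sumrec lam eta hl k
    linear_combination ((-I)^k) * hs - (2*(lam:ℂ)+(k:ℂ)+1) * (-I)^k *
      (∑ j ∈ range (k+3), Tm lam eta (k+2) j) * Complex.I_sq
  intro k
  induction k using Nat.strong_induction_on with
  | _ k ih =>
    match k with
    | 0 => exact hbase0
    | 1 => exact hbase1
    | (n+2) => exact hstep n (ih n (by omega)) (ih (n+1) (by omega))

theorem stmt19 :
    (∀ (lam eta : ℝ), 0 < lam → ∀ k : ℕ,
        crrMonic lam eta k 0 =
          (-I) ^ k *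
            ∑ j ∈ Finset.range (k + 1),
              poch (-(k : ℂ)) j * poch ((lam : ℂ) + (eta : ℂ) * I) j /
                  (poch (2 * lam) j * (Nat.factorial j : ℂ)) * 2 ^ j) ∧
      ∀ (L : ℕ) (eta : ℝ) (A : ℕ → ℂ),
        (∀ k : ℕ, (Nat.factorial k : ℂ) * A (k + L + 1) =
          crrMonic (L + 1) (-eta) k 0) →
        ∀ k : ℕ,
          A (k + L + 1) =
            (-I) ^ k / (Nat.factorial k : ℂ) *
              ∑ j ∈ Finset.range (k + 1),
                poch (-(k : ℂ)) j * poch ((L : ℂ) + 1 - (eta : ℂ) * I) j /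
                    (poch (2 * (L : ℂ) + 2) j * (Nat.factorial j : ℂ)) * 2 ^ j := by
  constructor
  · intro lam eta hl k
    simpa [Tm] using key lam eta hl k
  · intro L eta A hA k
    have hl : (0:ℝ) < (L:ℝ) + 1 := by positivity
    have hk := key ((L:ℝ)+1) (-eta) hl k
    have hb : ((((L:ℝ)+1) : ℝ) : ℂ) + ((-eta : ℝ) : ℂ) * I = (L:ℂ) + 1 - (eta:ℂ) * I := by
      push_cast; ring
    have hc : 2 * ((((L:ℝ)+1) : ℝ) : ℂ) = 2*(L:ℂ) + 2 := by
      push_cast; ring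
    simp only [Tm, hb, hc] at hk
    have h2 := hA k
    rw [hk] at h2
    have hfk : ((Nat.factorial k : ℕ) : ℂ) ≠ 0 := by
      exact_mod_cast Nat.cast_ne_zero.mpr (Nat.factorial_ne_zero k)
    rw [div_mul_eq_mul_div, eq_div_iff hfk]
    linear_combination h2
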